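/- Let F be an elementary abelian p-group C_p^n (n ≥ 2) and z, z' two distinct nontrivial elements with ⟨z⟩ ≠ ⟨z'⟩. Let d ≥ 1 and let θ ∈ C(F,p^d,z) ∩ C(F,p^d,z') be a cocycle for which both (z,0) and (z',0) are central of order p in L = X(F,F_p^d,θ). Then there is an automorphism φ of L with φ(z,0) = (z',0) and φ fixing {1}×F_p^d setwise; consequently θ^{(α₀,β₀,τ₀)} = θ for some (α₀,β₀,τ₀) ∈ Aut*(F,F_p^d) with z^{α₀} = z'. -/

import Mathlib

universe u v

/-- A loop: a set with binary operation, two-sided identity, and bijective translations. -/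
class Loop (Q : Type u) extends Mul Q, One Q where
  one_mul : ∀ x : Q, 1 * x = x
  mul_one : ∀ x : Q, x * 1 = x
  mulLeft_bij : ∀ x : Q, Function.Bijective (fun y : Q => x * y)
  mulRight_bij : ∀ x : Q, Function.Bijective (fun y : Q => y * x)

/-- `z` commutes and associates (in all three positions) with all elements,
with respect to the binary operation `mul`. -/
def IsCentral {Q : Type u} (mul : Q → Q → Q) (z : Q) : Prop :=
  (∀ x, mul z x = mul x z) ∧
  (∀ x y, mul z (mul x y) = mul (mul z x) y) ∧
  (∀ x y, mul x (mul z y) = mul (mul x z) y) ∧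
  (∀ x y, mul x (mul y z) = mul (mul x y) z)

/-- Normalized cocycle: θ(1,x) = θ(x,1) = 0. -/
def IsCocycle {F : Type u} {A : Type v} [One F] [AddCommGroup A]
    (θ : F → F → A) : Prop :=
  ∀ x : F, θ 1 x = 0 ∧ θ x 1 = 0

/-- Multiplication of the central extension X(F,A,θ) on F × A. -/
def cmul {F : Type u} {A : Type v} [Mul F] [AddCommGroup A]
    (θ : F → F → A) (p q : F × A) : F × A :=
  (p.1 * q.1, p.2 + q.2 + θ p.1 q.1)

/-- Left-normed powers: `lpow mul z n` is z^(n+1). -/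
def lpow {Q : Type u} (mul : Q → Q → Q) (z : Q) : ℕ → Q
  | 0 => z
  | n + 1 => mul (lpow mul z n) z

/-- Coboundary of τ. -/
def coboundary {F : Type u} {A : Type v} [Mul F] [AddCommGroup A]
    (τ : F → A) : F → F → A :=
  fun x y => τ (x * y) - τ x - τ y

/-- The affine automorphism group Aut*(F,A): triples (α,β,τ). -/
structure AutStar (F : Type u) (A : Type v) [Mul F] [One F] [AddCommGroup A] where
  α : F ≃ F
  mapMul : ∀ x y : F, α (x * y) = α x * α y
  mapOne : α 1 = 1
  β : A ≃+ A
  τ : F → A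
  τone : τ 1 = 0

namespace AutStar

variable {F : Type u} {A : Type v} [Mul F] [One F] [AddCommGroup A]

/-- Multiplication (α,β,τ)(α',β',τ') = (αα', ββ', ατ' + τβ'). -/
def mul (g h : AutStar F A) : AutStar F A where
  α := g.α.trans h.α
  mapMul := fun x y => by
    simp only [Equiv.trans_apply, g.mapMul, h.mapMul]
  mapOne := by simp only [Equiv.trans_apply, g.mapOne, h.mapOne]
  β := g.β.trans h.β
  τ := fun x => h.τ (g.α x) + h.β (g.τ x)
  τone := by simp only [g.mapOne, h.τone, g.τone, map_zero, add_zero]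

/-- The identity element of Aut*(F,A). -/
def one (F : Type u) (A : Type v) [Mul F] [One F] [AddCommGroup A] : AutStar F A where
  α := Equiv.refl F
  mapMul := fun _ _ => rfl
  mapOne := rfl
  β := AddEquiv.refl A
  τ := fun _ => 0
  τone := rfl

end AutStar

/-- The affine action of (α,β,τ) on F × A. -/
def actP {F : Type u} {A : Type v} [Mul F] [One F] [AddCommGroup A]
    (p : F × A) (g : AutStar F A) : F × A :=
  (g.α p.1, g.β p.2 + g.τ p.1)

/-- The affine action of (α,β,τ) on cocycles. -/
def actC {F : Type u} {A : Type v} [Mul F] [One F] [AddCommGroup A]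
    (θ : F → F → A) (g : AutStar F A) : F → F → A :=
  fun x y =>
    g.β (θ (g.α.symm x) (g.α.symm y)) + g.τ (g.α.symm (x * y))
      - g.τ (g.α.symm x) - g.τ (g.α.symm y)


/-! ### Auxiliary machinery -/

set_option linter.unusedSectionVars false
set_option maxHeartbeats 1000000

section Generic
variable {Q : Type u} {mul : Q → Q → Q} {c d : Q}

theorem IsCentral.mul_central (hc : IsCentral mul c) (hd : IsCentral mul d) :
    IsCentral mul (mul c d) := by
  obtain ⟨c1, c2, c3, c4⟩ := hc
  obtain ⟨d1, d2, d3, d4⟩ := hd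
  refine ⟨fun x => ?_, fun x y => ?_, fun x y => ?_, fun x y => ?_⟩
  · calc mul (mul c d) x = mul c (mul d x) := (c2 d x).symm
      _ = mul c (mul x d) := by rw [d1]
      _ = mul (mul c x) d := d4 c x
      _ = mul (mul x c) d := by rw [c1]
      _ = mul x (mul c d) := (d4 x c).symm
  · calc mul (mul c d) (mul x y) = mul c (mul d (mul x y)) := (c2 _ _).symm
      _ = mul c (mul (mul d x) y) := by rw [d2]
      _ = mul (mul c (mul d x)) y := c2 _ _
      _ = mul (mul (mul c d) x) y := by rw [c2 d x]
  · calc mul x (mul (mul c d) y) = mul x (mul c (mul d y)) := by rw [c2]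
      _ = mul (mul x c) (mul d y) := c3 _ _
      _ = mul (mul (mul x c) d) y := d3 _ _
      _ = mul (mul x (mul c d)) y := by rw [← d4 x c]
  · calc mul x (mul y (mul c d)) = mul x (mul (mul y c) d) := by rw [d4 y c]
      _ = mul (mul x (mul y c)) d := d4 _ _
      _ = mul (mul (mul x y) c) d := by rw [c4]
      _ = mul (mul x y) (mul c d) := (c3 _ _).symm

theorem central_mul_mul (hc : IsCentral mul c) (hd : IsCentral mul d) (q r : Q) :
    mul (mul q c) (mul r d) = mul (mul q r) (mul c d) := by
  obtain ⟨c1, c2, c3, c4⟩ := hc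
  obtain ⟨d1, d2, d3, d4⟩ := hd
  calc mul (mul q c) (mul r d) = mul (mul (mul q c) r) d := d4 _ _
    _ = mul (mul q (mul c r)) d := by rw [← c3 q r]
    _ = mul (mul q (mul r c)) d := by rw [c1]
    _ = mul (mul (mul q r) c) d := by rw [c4]
    _ = mul (mul q r) (mul c d) := (c3 _ _).symm

theorem central_swap (hc : IsCentral mul c) (hd : IsCentral mul d) (q : Q) :
    mul (mul q c) d = mul (mul q d) c := by
  obtain ⟨c1, c2, c3, c4⟩ := hc
  obtain ⟨d1, d2, d3, d4⟩ := hd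
  calc mul (mul q c) d = mul q (mul c d) := (c3 q d).symm
    _ = mul q (mul d c) := by rw [c1]
    _ = mul (mul q d) c := d3 q c

end Generic

section ZpSec
variable {F : Type u} {A : Type v} [CommGroup F] [AddCommGroup A]

def Zp (θ : F → F → A) (z0 : F × A) : ℕ → F × A
  | 0 => (1, 0)
  | k+1 => cmul θ (Zp θ z0 k) z0

variable {θ : F → F → A} {z0 : F × A}

theorem cmul_one (hθ : IsCocycle θ) (q : F × A) : cmul θ q (1, 0) = q := by
  simp [cmul, (hθ q.1).2]

theorem one_cmul (hθ : IsCocycle θ) (q : F × A) : cmul θ (1, 0) q = q := by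
  simp [cmul, (hθ q.1).1]

theorem one_central (hθ : IsCocycle θ) : IsCentral (cmul θ) ((1 : F), (0 : A)) := by
  refine ⟨fun x => ?_, fun x y => ?_, fun x y => ?_, fun x y => ?_⟩ <;>
    simp [cmul_one hθ, one_cmul hθ]

theorem Zp_central (hθ : IsCocycle θ) (hc : IsCentral (cmul θ) z0) :
    ∀ k, IsCentral (cmul θ) (Zp θ z0 k)
  | 0 => one_central hθ
  | k+1 => (Zp_central hθ hc k).mul_central hc

theorem Zp_add (hθ : IsCocycle θ) (hc : IsCentral (cmul θ) z0) (m : ℕ) :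
    ∀ k, cmul θ (Zp θ z0 m) (Zp θ z0 k) = Zp θ z0 (m + k)
  | 0 => cmul_one hθ _
  | k+1 => by
    show cmul θ (Zp θ z0 m) (cmul θ (Zp θ z0 k) z0) = cmul θ (Zp θ z0 (m+k)) z0
    rw [hc.2.2.2, Zp_add hθ hc m k]

theorem Zp_fst : ∀ k, (Zp θ z0 k).1 = z0.1 ^ k
  | 0 => by simp [Zp]
  | k+1 => by
    show (cmul θ (Zp θ z0 k) z0).1 = _
    rw [cmul, Zp_fst k]
    exact (pow_succ _ _).symm

theorem Zp_succ_lpow (hθ : IsCocycle θ) : ∀ k, Zp θ z0 (k+1) = lpow (cmul θ) z0 k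
  | 0 => by show cmul θ (1,0) z0 = z0; exact one_cmul hθ z0
  | k+1 => by
    show cmul θ (Zp θ z0 (k+1)) z0 = _
    rw [Zp_succ_lpow hθ k]; rfl

theorem Zp_mod {p : ℕ} (hθ : IsCocycle θ) (hc : IsCentral (cmul θ) z0)
    (hp : 2 ≤ p) (hord : lpow (cmul θ) z0 (p - 1) = (1, 0)) (m : ℕ) :
    Zp θ z0 m = Zp θ z0 (m % p) := by
  have hZp : Zp θ z0 p = (1, 0) := by
    have h : p - 1 + 1 = p := by omega
    rw [← h, Zp_succ_lpow hθ, hord]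
  have hper : ∀ a b : ℕ, Zp θ z0 (a + p * b) = Zp θ z0 a := by
    intro a b
    induction b with
    | zero => simp
    | succ b ih =>
      have h : a + p * (b+1) = (a + p * b) + p := by ring
      rw [h, ← Zp_add hθ hc, hZp, cmul_one hθ, ih]
  conv_lhs => rw [← Nat.mod_add_div m p]
  exact hper _ _

end ZpSec

theorem exists_fg (p : ℕ) (hp : p.Prime) {n : ℕ}
    (z z' : Multiplicative (Fin n → ZMod p)) (hz1 : z ≠ 1) (hz'1 : z' ≠ 1)
    (hzz' : Subgroup.zpowers z ≠ Subgroup.zpowers z') :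
    ∃ f g : (Fin n → ZMod p) →ₗ[ZMod p] ZMod p,
      f z.toAdd = 1 ∧ f z'.toAdd = 0 ∧ g z.toAdd = 0 ∧ g z'.toAdd = 1 := by
  haveI := Fact.mk hp
  set zv := Multiplicative.toAdd z with hzv
  set z'v := Multiplicative.toAdd z' with hz'v
  have hpowval : ∀ (c : ZMod p), Multiplicative.toAdd (z ^ c.val) = c • zv := by
    intro c
    rw [toAdd_pow, ← Nat.cast_smul_eq_nsmul (ZMod p), ZMod.natCast_val, ZMod.cast_id]
  have hpowval' : ∀ (c : ZMod p), Multiplicative.toAdd (z' ^ c.val) = c • z'v := by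
    intro c
    rw [toAdd_pow, ← Nat.cast_smul_eq_nsmul (ZMod p), ZMod.natCast_val, ZMod.cast_id]
  have hzero : ∀ (a : Multiplicative (Fin n → ZMod p)), a = 1 ↔ Multiplicative.toAdd a = 0 := by
    intro a; constructor
    · intro h; rw [h]; rfl
    · intro h; have := congrArg Multiplicative.ofAdd h; simpa using this
  have li : LinearIndependent (ZMod p) ![zv, z'v] := by
    rw [LinearIndependent.pair_iff]
    intro s t hst
    by_contra hcon
    have hs : ¬ (s = 0 ∧ t = 0) := hcon
    by_cases hs0 : s = 0
    · have ht0 : t ≠ 0 := fun h => hs ⟨hs0, h⟩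
      apply hz'1
      rw [hzero]
      have h1 : t • z'v = 0 := by rw [hs0] at hst; simpa using hst
      have h2 := congrArg (fun v => t⁻¹ • v) h1
      simpa [smul_smul, inv_mul_cancel₀ ht0, hz'v] using h2
    · by_cases ht0 : t = 0
      · apply hz1
        rw [hzero]
        have h1 : s • zv = 0 := by rw [ht0] at hst; simpa using hst
        have h2 := congrArg (fun v => s⁻¹ • v) h1
        simpa [smul_smul, inv_mul_cancel₀ hs0, hzv] using h2
      · set c : ZMod p := -s / t with hc
        have hc0 : c ≠ 0 := by
          simp only [hc, div_ne_zero_iff, neg_ne_zero]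
          exact ⟨hs0, ht0⟩
        have hrel : z'v = c • zv := by
          have hts : t • z'v = (-s) • zv := by
            rw [neg_smul, eq_neg_iff_add_eq_zero, add_comm]; exact hst
          have h2 := congrArg (fun v => t⁻¹ • v) hts
          simp only [smul_smul, inv_mul_cancel₀ ht0, one_smul] at h2
          rw [h2, hc, div_eq_mul_inv, mul_comm]
        apply hzz'
        have h1 : z' = z ^ c.val :=
          (Multiplicative.toAdd.injective
            (show Multiplicative.toAdd (z ^ c.val) = Multiplicative.toAdd z' by
              rw [hpowval]; exact hrel.symm)).symm
        have h2 : z = z' ^ (c⁻¹).val :=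
          (Multiplicative.toAdd.injective
            (show Multiplicative.toAdd (z' ^ (c⁻¹).val) = Multiplicative.toAdd z by
              rw [hpowval', hrel, smul_smul, inv_mul_cancel₀ hc0, one_smul])).symm
        apply le_antisymm
        · rw [Subgroup.zpowers_le, h2]; exact pow_mem (Subgroup.mem_zpowers z') _
        · rw [Subgroup.zpowers_le, h1]; exact pow_mem (Subgroup.mem_zpowers z) _
  have hne : zv ≠ z'v := by
    intro h
    apply hzz'
    have h2 : z = z' := by
      have := congrArg Multiplicative.ofAdd h
      simpa [hzv, hz'v] using this
    rw [h2]
  have hli := li.linearIndepOn_id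
  let B := Module.Basis.extend hli
  have hmem : zv ∈ hli.extend (Set.subset_univ _) := by
    apply hli.subset_extend
    exact ⟨0, rfl⟩
  have hmem' : z'v ∈ hli.extend (Set.subset_univ _) := by
    apply hli.subset_extend
    exact ⟨1, rfl⟩
  have e1 : B ⟨zv, hmem⟩ = zv := Module.Basis.extend_apply_self hli _
  have e2 : B ⟨z'v, hmem'⟩ = z'v := Module.Basis.extend_apply_self hli _
  have hidx : (⟨zv, hmem⟩ : {x // x ∈ hli.extend (Set.subset_univ _)}) ≠ ⟨z'v, hmem'⟩ := by
    simp [Subtype.ext_iff, hne]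
  refine ⟨B.coord ⟨zv, hmem⟩, B.coord ⟨z'v, hmem'⟩, ?_, ?_, ?_, ?_⟩
  · calc B.coord ⟨zv, hmem⟩ zv = B.repr (B ⟨zv, hmem⟩) ⟨zv, hmem⟩ := by
          rw [Module.Basis.coord_apply, e1]
      _ = 1 := by rw [Module.Basis.repr_self]; exact Finsupp.single_eq_same
  · calc B.coord ⟨zv, hmem⟩ z'v = B.repr (B ⟨z'v, hmem'⟩) ⟨zv, hmem⟩ := by
          rw [Module.Basis.coord_apply, e2]
      _ = 0 := by rw [Module.Basis.repr_self]; exact Finsupp.single_eq_of_ne' hidx.symm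
  · calc B.coord ⟨z'v, hmem'⟩ zv = B.repr (B ⟨zv, hmem⟩) ⟨z'v, hmem'⟩ := by
          rw [Module.Basis.coord_apply, e1]
      _ = 0 := by rw [Module.Basis.repr_self]; exact Finsupp.single_eq_of_ne' hidx
  · calc B.coord ⟨z'v, hmem'⟩ z'v = B.repr (B ⟨z'v, hmem'⟩) ⟨z'v, hmem'⟩ := by
          rw [Module.Basis.coord_apply, e2]
      _ = 1 := by rw [Module.Basis.repr_self]; exact Finsupp.single_eq_same

section Conc
variable {p n d : ℕ} [Fact (Nat.Prime p)]

abbrev Fm (p n : ℕ) := Multiplicative (Fin n → ZMod p)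

variable (f g : (Fin n → ZMod p) →ₗ[ZMod p] ZMod p) (z z' : Fm p n)

def wF (x : Fm p n) : Fm p n :=
  Multiplicative.ofAdd (x.toAdd - f x.toAdd • z.toAdd - g x.toAdd • z'.toAdd)

def alF (x : Fm p n) : Fm p n :=
  Multiplicative.ofAdd (x.toAdd + (f x.toAdd - g x.toAdd) • (z'.toAdd - z.toAdd))

def iN (x : Fm p n) : ℕ := (f x.toAdd).val

theorem hns (c : ZMod p) (v : Fin n → ZMod p) : c.val • v = c • v := by
  rw [← Nat.cast_smul_eq_nsmul (ZMod p), ZMod.natCast_val, ZMod.cast_id]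

section vals
variable (hfz : f z.toAdd = 1) (hfz' : f z'.toAdd = 0)
  (hgz : g z.toAdd = 0) (hgz' : g z'.toAdd = 1)

include hfz hfz' hgz hgz'

theorem wF_spec (x : Fm p n) :
    wF f g z z' x * z ^ iN f x * z' ^ iN g x = x := by
  apply Multiplicative.toAdd.injective
  simp only [toAdd_mul, toAdd_pow, wF, iN, toAdd_ofAdd, hns]
  module

theorem alF_spec (x : Fm p n) :
    wF f g z z' x * z' ^ iN f x * z ^ iN g x = alF f g z z' x := by
  apply Multiplicative.toAdd.injective
  simp only [toAdd_mul, toAdd_pow, wF, alF, iN, toAdd_ofAdd, hns]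
  module

theorem f_alF (x : Fm p n) : f (alF f g z z' x).toAdd = g x.toAdd := by
  simp only [alF, toAdd_ofAdd, map_add, map_smul, map_sub, hfz, hfz', hgz, hgz', smul_eq_mul]
  ring

theorem g_alF (x : Fm p n) : g (alF f g z z' x).toAdd = f x.toAdd := by
  simp only [alF, toAdd_ofAdd, map_add, map_smul, map_sub, hfz, hfz', hgz, hgz', smul_eq_mul]
  ring

theorem wF_alF (x : Fm p n) : wF f g z z' (alF f g z z' x) = wF f g z z' x := by
  apply Multiplicative.toAdd.injective
  simp only [wF, toAdd_ofAdd]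
  rw [f_alF f g z z' hfz hfz' hgz hgz', g_alF f g z z' hfz hfz' hgz hgz']
  simp only [alF, toAdd_ofAdd]
  module

theorem alF_invol (x : Fm p n) : alF f g z z' (alF f g z z' x) = x := by
  apply Multiplicative.toAdd.injective
  conv_lhs => rw [alF, toAdd_ofAdd, f_alF f g z z' hfz hfz' hgz hgz',
    g_alF f g z z' hfz hfz' hgz hgz', alF, toAdd_ofAdd]
  module

omit hfz' hgz' in
theorem alF_z : alF f g z z' z = z' := by
  apply Multiplicative.toAdd.injective
  simp only [alF, toAdd_ofAdd, hfz, hgz]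
  module

omit hfz' hgz' in
theorem wF_z : wF f g z z' z = 1 := by
  apply Multiplicative.toAdd.injective
  simp only [wF, toAdd_ofAdd, hfz, hgz, toAdd_one]
  module

end vals

theorem alF_mul (x y : Fm p n) :
    alF f g z z' (x * y) = alF f g z z' x * alF f g z z' y := by
  apply Multiplicative.toAdd.injective
  simp only [alF, toAdd_mul, toAdd_ofAdd, map_add]
  module

theorem alF_one : alF f g z z' 1 = 1 := by
  apply Multiplicative.toAdd.injective
  simp only [alF, toAdd_one, map_zero, toAdd_ofAdd]
  module

theorem wF_mul (x y : Fm p n) : wF f g z z' (x * y) = wF f g z z' x * wF f g z z' y := by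
  apply Multiplicative.toAdd.injective
  simp only [wF, toAdd_mul, toAdd_ofAdd, map_add]
  module

theorem wF_one : wF f g z z' 1 = 1 := by
  apply Multiplicative.toAdd.injective
  simp only [wF, toAdd_one, map_zero, toAdd_ofAdd]
  module

theorem iN_mod (x y : Fm p n) [NeZero p] :
    iN f (x * y) % p = (iN f x + iN f y) % p := by
  simp only [iN, toAdd_mul, map_add, ZMod.val_add]
  exact Nat.mod_mod_of_dvd _ dvd_rfl

theorem iN_one : iN f (1 : Fm p n) = 0 := by
  simp [iN]

theorem iN_z (hfz : f z.toAdd = 1) (hp1 : 1 < p) : iN f z = 1 := by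
  haveI : Fact (1 < p) := ⟨hp1⟩
  simp [iN, hfz, ZMod.val_one]

theorem iN_z0 (hgz : g z.toAdd = 0) : iN g z = 0 := by
  simp [iN, hgz]

variable (θ : Fm p n → Fm p n → (Fin d → ZMod p))

def PF (x : Fm p n) : Fin d → ZMod p :=
  (cmul θ (cmul θ (wF f g z z' x, 0) (Zp θ (z, 0) (iN f x))) (Zp θ (z', 0) (iN g x))).2

def QF (x : Fm p n) : Fin d → ZMod p :=
  (cmul θ (cmul θ (wF f g z z' x, 0) (Zp θ (z', 0) (iN f x))) (Zp θ (z, 0) (iN g x))).2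

def tauF (x : Fm p n) : Fin d → ZMod p :=
  QF f g z z' θ x - PF f g z z' θ x

theorem cmul_shift (s : Fin d → ZMod p) (q u : Fm p n × (Fin d → ZMod p)) :
    cmul θ (q.1, s + q.2) u = ((cmul θ q u).1, s + (cmul θ q u).2) := by
  simp [cmul, add_assoc]

theorem snd_decP (x : Fm p n) (c : Fin d → ZMod p) :
    (cmul θ (cmul θ (wF f g z z' x, c) (Zp θ (z, 0) (iN f x))) (Zp θ (z', 0) (iN g x))).2
      = c + PF f g z z' θ x := by
  have h : (wF f g z z' x, c) = ((wF f g z z' x, (0 : Fin d → ZMod p)).1,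
      c + (wF f g z z' x, (0 : Fin d → ZMod p)).2) := by simp
  rw [h, cmul_shift, cmul_shift]
  rfl

theorem snd_decQ (x : Fm p n) (c : Fin d → ZMod p) :
    (cmul θ (cmul θ (wF f g z z' x, c) (Zp θ (z', 0) (iN f x))) (Zp θ (z, 0) (iN g x))).2
      = c + QF f g z z' θ x := by
  have h : (wF f g z z' x, c) = ((wF f g z z' x, (0 : Fin d → ZMod p)).1,
      c + (wF f g z z' x, (0 : Fin d → ZMod p)).2) := by simp
  rw [h, cmul_shift, cmul_shift]
  rfl

theorem decP (hfz : f z.toAdd = 1) (hfz' : f z'.toAdd = 0)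
    (hgz : g z.toAdd = 0) (hgz' : g z'.toAdd = 1) (x : Fm p n) :
    ((x, PF f g z z' θ x) : Fm p n × (Fin d → ZMod p))
      = cmul θ (cmul θ (wF f g z z' x, 0) (Zp θ (z, 0) (iN f x))) (Zp θ (z', 0) (iN g x)) := by
  refine Prod.ext ?_ rfl
  show x = (cmul θ (cmul θ (wF f g z z' x, 0) (Zp θ (z, 0) (iN f x))) (Zp θ (z', 0) (iN g x))).1
  show x = wF f g z z' x * (Zp θ (z, 0) (iN f x)).1 * (Zp θ (z', 0) (iN g x)).1
  rw [Zp_fst, Zp_fst]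
  exact (wF_spec f g z z' hfz hfz' hgz hgz' x).symm

theorem decQ (hfz : f z.toAdd = 1) (hfz' : f z'.toAdd = 0)
    (hgz : g z.toAdd = 0) (hgz' : g z'.toAdd = 1) (x : Fm p n) :
    ((alF f g z z' x, QF f g z z' θ x) : Fm p n × (Fin d → ZMod p))
      = cmul θ (cmul θ (wF f g z z' x, 0) (Zp θ (z', 0) (iN f x))) (Zp θ (z, 0) (iN g x)) := by
  refine Prod.ext ?_ rfl
  show alF f g z z' x
      = (cmul θ (cmul θ (wF f g z z' x, 0) (Zp θ (z', 0) (iN f x))) (Zp θ (z, 0) (iN g x))).1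
  show alF f g z z' x = wF f g z z' x * (Zp θ (z', 0) (iN f x)).1 * (Zp θ (z, 0) (iN g x)).1
  rw [Zp_fst, Zp_fst]
  exact (alF_spec f g z z' hfz hfz' hgz hgz' x).symm

section keys
variable (hθ : IsCocycle θ)
    (hzc : IsCentral (cmul θ) (z, (0 : Fin d → ZMod p)))
    (hz'c : IsCentral (cmul θ) (z', (0 : Fin d → ZMod p)))
    (hzord : lpow (cmul θ) (z, (0 : Fin d → ZMod p)) (p - 1) = (1, 0))
    (hz'ord : lpow (cmul θ) (z', (0 : Fin d → ZMod p)) (p - 1) = (1, 0))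
    (hfz : f z.toAdd = 1) (hfz' : f z'.toAdd = 0)
    (hgz : g z.toAdd = 0) (hgz' : g z'.toAdd = 1)

include hθ hzc hz'c hzord hz'ord hfz hfz' hgz hgz'

theorem keyI (x y : Fm p n) :
    PF f g z z' θ x + PF f g z z' θ y + θ x y
      = θ (wF f g z z' x) (wF f g z z' y) + PF f g z z' θ (x * y) := by
  have h2p : 2 ≤ p := (Fact.out : p.Prime).two_le
  haveI : NeZero p := ⟨by omega⟩
  have hZm := Zp_mod (p := p) hθ hzc h2p hzord
  have hZ'm := Zp_mod (p := p) hθ hz'c h2p hz'ord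
  have hZe : Zp θ (z, (0 : Fin d → ZMod p)) (iN f x + iN f y)
      = Zp θ (z, 0) (iN f (x * y)) := by
    rw [hZm (iN f x + iN f y), hZm (iN f (x * y)), iN_mod f x y]
  have hZ'e : Zp θ (z', (0 : Fin d → ZMod p)) (iN g x + iN g y)
      = Zp θ (z', 0) (iN g (x * y)) := by
    rw [hZ'm (iN g x + iN g y), hZ'm (iN g (x * y)), iN_mod g x y]
  have hW : cmul θ (wF f g z z' x, (0 : Fin d → ZMod p)) (wF f g z z' y, 0)
      = (wF f g z z' (x * y), θ (wF f g z z' x) (wF f g z z' y)) := by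
    simp [cmul, ← wF_mul]
  have h : cmul θ (x, PF f g z z' θ x) (y, PF f g z z' θ y)
      = cmul θ (cmul θ (wF f g z z' (x * y), θ (wF f g z z' x) (wF f g z z' y))
          (Zp θ (z, 0) (iN f (x * y)))) (Zp θ (z', 0) (iN g (x * y))) := by
    rw [decP f g z z' θ hfz hfz' hgz hgz' x, decP f g z z' θ hfz hfz' hgz hgz' y]
    rw [central_mul_mul (Zp_central hθ hz'c (iN g x)) (Zp_central hθ hz'c (iN g y))]
    rw [central_mul_mul (Zp_central hθ hzc (iN f x)) (Zp_central hθ hzc (iN f y))]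
    rw [Zp_add hθ hzc, Zp_add hθ hz'c, hZe, hZ'e, hW]
  have h2 := congrArg Prod.snd h
  rw [snd_decP f g z z' θ (x * y) (θ (wF f g z z' x) (wF f g z z' y))] at h2
  simpa [cmul] using h2

theorem keyII (x y : Fm p n) :
    QF f g z z' θ x + QF f g z z' θ y + θ (alF f g z z' x) (alF f g z z' y)
      = θ (wF f g z z' x) (wF f g z z' y) + QF f g z z' θ (x * y) := by
  have h2p : 2 ≤ p := (Fact.out : p.Prime).two_le
  haveI : NeZero p := ⟨by omega⟩
  have hZm := Zp_mod (p := p) hθ hzc h2p hzord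
  have hZ'm := Zp_mod (p := p) hθ hz'c h2p hz'ord
  have hZe : Zp θ (z', (0 : Fin d → ZMod p)) (iN f x + iN f y)
      = Zp θ (z', 0) (iN f (x * y)) := by
    rw [hZ'm (iN f x + iN f y), hZ'm (iN f (x * y)), iN_mod f x y]
  have hZ'e : Zp θ (z, (0 : Fin d → ZMod p)) (iN g x + iN g y)
      = Zp θ (z, 0) (iN g (x * y)) := by
    rw [hZm (iN g x + iN g y), hZm (iN g (x * y)), iN_mod g x y]
  have hW : cmul θ (wF f g z z' x, (0 : Fin d → ZMod p)) (wF f g z z' y, 0)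
      = (wF f g z z' (x * y), θ (wF f g z z' x) (wF f g z z' y)) := by
    simp [cmul, ← wF_mul]
  have h : cmul θ (alF f g z z' x, QF f g z z' θ x) (alF f g z z' y, QF f g z z' θ y)
      = cmul θ (cmul θ (wF f g z z' (x * y), θ (wF f g z z' x) (wF f g z z' y))
          (Zp θ (z', 0) (iN f (x * y)))) (Zp θ (z, 0) (iN g (x * y))) := by
    rw [decQ f g z z' θ hfz hfz' hgz hgz' x, decQ f g z z' θ hfz hfz' hgz hgz' y]
    rw [central_mul_mul (Zp_central hθ hzc (iN g x)) (Zp_central hθ hzc (iN g y))]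
    rw [central_mul_mul (Zp_central hθ hz'c (iN f x)) (Zp_central hθ hz'c (iN f y))]
    rw [Zp_add hθ hz'c, Zp_add hθ hzc, hZe, hZ'e, hW]
  have h2 := congrArg Prod.snd h
  rw [snd_decQ f g z z' θ (x * y) (θ (wF f g z z' x) (wF f g z z' y))] at h2
  simpa [cmul] using h2

theorem dagger (x y : Fm p n) :
    θ (alF f g z z' x) (alF f g z z' y) + tauF f g z z' θ x + tauF f g z z' θ y
      = θ x y + tauF f g z z' θ (x * y) := by
  have h1 := keyI f g z z' θ hθ hzc hz'c hzord hz'ord hfz hfz' hgz hgz' x y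
  have h2 := keyII f g z z' θ hθ hzc hz'c hzord hz'ord hfz hfz' hgz hgz' x y
  simp only [tauF]
  linear_combination h2 - h1

end keys

theorem iN_f_al (hfz : f z.toAdd = 1) (hfz' : f z'.toAdd = 0)
    (hgz : g z.toAdd = 0) (hgz' : g z'.toAdd = 1) (x : Fm p n) :
    iN f (alF f g z z' x) = iN g x := by
  simp only [iN]
  rw [f_alF f g z z' hfz hfz' hgz hgz']

theorem iN_g_al (hfz : f z.toAdd = 1) (hfz' : f z'.toAdd = 0)
    (hgz : g z.toAdd = 0) (hgz' : g z'.toAdd = 1) (x : Fm p n) :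
    iN g (alF f g z z' x) = iN f x := by
  simp only [iN]
  rw [g_alF f g z z' hfz hfz' hgz hgz']

theorem PF_al (hθ : IsCocycle θ)
    (hzc : IsCentral (cmul θ) (z, (0 : Fin d → ZMod p)))
    (hz'c : IsCentral (cmul θ) (z', (0 : Fin d → ZMod p)))
    (hfz : f z.toAdd = 1) (hfz' : f z'.toAdd = 0)
    (hgz : g z.toAdd = 0) (hgz' : g z'.toAdd = 1) (x : Fm p n) :
    PF f g z z' θ (alF f g z z' x) = QF f g z z' θ x := by
  simp only [PF, QF]
  rw [wF_alF f g z z' hfz hfz' hgz hgz', iN_f_al f g z z' hfz hfz' hgz hgz',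
    iN_g_al f g z z' hfz hfz' hgz hgz']
  rw [central_swap (Zp_central hθ hzc (iN g x)) (Zp_central hθ hz'c (iN f x))]

theorem QF_al (hθ : IsCocycle θ)
    (hzc : IsCentral (cmul θ) (z, (0 : Fin d → ZMod p)))
    (hz'c : IsCentral (cmul θ) (z', (0 : Fin d → ZMod p)))
    (hfz : f z.toAdd = 1) (hfz' : f z'.toAdd = 0)
    (hgz : g z.toAdd = 0) (hgz' : g z'.toAdd = 1) (x : Fm p n) :
    QF f g z z' θ (alF f g z z' x) = PF f g z z' θ x := by
  simp only [PF, QF]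
  rw [wF_alF f g z z' hfz hfz' hgz hgz', iN_f_al f g z z' hfz hfz' hgz hgz',
    iN_g_al f g z z' hfz hfz' hgz hgz']
  rw [central_swap (Zp_central hθ hz'c (iN g x)) (Zp_central hθ hzc (iN f x))]

theorem tau_al (hθ : IsCocycle θ)
    (hzc : IsCentral (cmul θ) (z, (0 : Fin d → ZMod p)))
    (hz'c : IsCentral (cmul θ) (z', (0 : Fin d → ZMod p)))
    (hfz : f z.toAdd = 1) (hfz' : f z'.toAdd = 0)
    (hgz : g z.toAdd = 0) (hgz' : g z'.toAdd = 1) (x : Fm p n) :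
    tauF f g z z' θ (alF f g z z' x) = - tauF f g z z' θ x := by
  simp only [tauF, PF_al f g z z' θ hθ hzc hz'c hfz hfz' hgz hgz',
    QF_al f g z z' θ hθ hzc hz'c hfz hfz' hgz hgz']
  abel

theorem tau_one (hθ : IsCocycle θ) : tauF f g z z' θ (1 : Fm p n) = 0 := by
  have hθ1 : ∀ x, θ 1 x = 0 := fun x => (hθ x).1
  have hθ2 : ∀ x, θ x 1 = 0 := fun x => (hθ x).2
  simp [tauF, PF, QF, iN_one, wF_one, Zp, cmul, hθ1, hθ2]

theorem tau_z (hθ : IsCocycle θ) (hfz : f z.toAdd = 1) (hgz : g z.toAdd = 0)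
    (hp1 : 1 < p) : tauF f g z z' θ z = 0 := by
  have hθ1 : ∀ x, θ 1 x = 0 := fun x => (hθ x).1
  have hθ2 : ∀ x, θ x 1 = 0 := fun x => (hθ x).2
  simp [tauF, PF, QF, iN_z f z hfz hp1, iN_z0 g z hgz, wF_z f g z z' hfz hgz,
    Zp, cmul, hθ1, hθ2]

end Conc

/-- For an elementary abelian p-group F = C_p^n and distinct central directions
z, z' with ⟨z⟩ ≠ ⟨z'⟩, any cocycle θ for which both (z,0) and (z',0) are central
of order p in L = X(F,F_p^d,θ) admits an automorphism φ of L with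
φ(z,0) = (z',0) fixing {1}×F_p^d setwise; consequently θ^{(α₀,β₀,τ₀)} = θ
for some (α₀,β₀,τ₀) ∈ Aut*(F,F_p^d) with z^{α₀} = z'. -/
theorem stmt19 (p n d : ℕ) (hp : p.Prime) (hn : 2 ≤ n) (hd : 1 ≤ d)
    (z z' : Multiplicative (Fin n → ZMod p))
    (hz1 : z ≠ 1) (hz'1 : z' ≠ 1)
    (hzz' : Subgroup.zpowers z ≠ Subgroup.zpowers z')
    (θ : Multiplicative (Fin n → ZMod p) → Multiplicative (Fin n → ZMod p) →
      (Fin d → ZMod p))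
    (hθ : IsCocycle θ)
    (hzcen : IsCentral (cmul θ) (z, (0 : Fin d → ZMod p)))
    (hzord : lpow (cmul θ) (z, (0 : Fin d → ZMod p)) (p - 1) = (1, 0))
    (hz'cen : IsCentral (cmul θ) (z', (0 : Fin d → ZMod p)))
    (hz'ord : lpow (cmul θ) (z', (0 : Fin d → ZMod p)) (p - 1) = (1, 0)) :
    (∃ φ : (Multiplicative (Fin n → ZMod p) × (Fin d → ZMod p)) ≃
        (Multiplicative (Fin n → ZMod p) × (Fin d → ZMod p)),
      (∀ q r, φ (cmul θ q r) = cmul θ (φ q) (φ r)) ∧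
      φ (z, 0) = (z', 0) ∧
      φ '' {q | q.1 = 1} = {q | q.1 = 1}) ∧
    (∃ g : AutStar (Multiplicative (Fin n → ZMod p)) (Fin d → ZMod p),
      actC θ g = θ ∧ g.α z = z') := by
  haveI := Fact.mk hp
  obtain ⟨f, g, hfz, hfz', hgz, hgz'⟩ := exists_fg p hp z z' hz1 hz'1 hzz'
  have hp1 : 1 < p := hp.one_lt
  have hdag := dagger f g z z' θ hθ hzcen hz'cen hzord hz'ord hfz hfz' hgz hgz'
  have hinv : ∀ x, alF f g z z' (alF f g z z' x) = x :=
    alF_invol f g z z' hfz hfz' hgz hgz'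
  have htal : ∀ x, tauF f g z z' θ (alF f g z z' x) = - tauF f g z z' θ x :=
    tau_al f g z z' θ hθ hzcen hz'cen hfz hfz' hgz hgz'
  have hone : tauF f g z z' θ 1 = 0 := tau_one f g z z' θ hθ
  have htz : tauF f g z z' θ z = 0 := tau_z f g z z' θ hθ hfz hgz hp1
  have halmul := alF_mul f g z z'
  have hal1 := alF_one f g z z'
  have halz := alF_z f g z z' hfz hgz
  set φf : (Multiplicative (Fin n → ZMod p) × (Fin d → ZMod p)) →
      (Multiplicative (Fin n → ZMod p) × (Fin d → ZMod p)) :=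
    fun q => (alF f g z z' q.1, q.2 + tauF f g z z' θ q.1) with hφf
  have hφinv : Function.Involutive φf := by
    intro q
    show (alF f g z z' (alF f g z z' q.1),
      (q.2 + tauF f g z z' θ q.1) + tauF f g z z' θ (alF f g z z' q.1)) = q
    rw [hinv, htal]
    refine Prod.ext rfl ?_
    show q.2 + tauF f g z z' θ q.1 + - tauF f g z z' θ q.1 = q.2
    abel
  have hαinv : Function.Involutive (alF f g z z') := hinv
  constructor
  · refine ⟨hφinv.toPerm, ?_, ?_, ?_⟩
    · intro q r
      show φf (cmul θ q r) = cmul θ (φf q) (φf r)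
      simp only [hφf, cmul]
      refine Prod.ext (halmul _ _) ?_
      have h := hdag q.1 r.1
      linear_combination -h
    · show φf (z, 0) = (z', 0)
      simp only [hφf]
      rw [halz, htz, add_zero]
    · ext q
      simp only [Set.mem_image, Set.mem_setOf_eq]
      constructor
      · rintro ⟨r, hr, rfl⟩
        show (φf r).1 = 1
        simp only [hφf]
        show alF f g z z' r.1 = 1
        rw [hr, hal1]
      · intro hq
        refine ⟨(1, q.2), rfl, ?_⟩
        show φf (1, q.2) = q
        simp only [hφf]
        show (alF f g z z' 1, q.2 + tauF f g z z' θ 1) = q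
        rw [hal1, hone, add_zero]
        exact Prod.ext hq.symm rfl
  · refine ⟨⟨hαinv.toPerm, halmul, hal1, AddEquiv.refl _, tauF f g z z' θ, hone⟩, ?_, halz⟩
    funext x y
    show θ (alF f g z z' x) (alF f g z z' y) + tauF f g z z' θ (alF f g z z' (x * y))
        - tauF f g z z' θ (alF f g z z' x) - tauF f g z z' θ (alF f g z z' y) = θ x y
    have h := hdag (alF f g z z' x) (alF f g z z' y)
    rw [hinv x, hinv y, ← halmul x y] at h
    linear_combination -h
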